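/- Let p be a prime, G a finite group, N a normal subgroup of G, P a p-subgroup of G, and P0 := P ∩ N. Let g be an element of G normalizing P, of order coprime to p, such that x⁻¹·g⁻¹xg ∈ P0 for all x ∈ P, and let n ∈ N satisfy g⁻¹xg = n⁻¹xn for all x ∈ P0. Then g·n⁻¹ centralizes P0, and for every x ∈ P the commutator x⁻¹·(gn⁻¹)⁻¹·x·(gn⁻¹) lies in N ∩ C_G(P0). -/

import Mathlib

theorem stmt3 (p : ℕ) (hp : p.Prime) {G : Type*} [Group G] [Finite G]
    (N : Subgroup G) [N.Normal] (P : Subgroup G) (hPp : IsPGroup p P)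
    (g : G) (hgP : g ∈ Subgroup.normalizer (P : Set G)) (hg : Nat.Coprime (orderOf g) p)
    (hgcomm : ∀ x ∈ P, x⁻¹ * (g⁻¹ * x * g) ∈ P ⊓ N)
    (n : G) (hnN : n ∈ N)
    (hgn : ∀ x ∈ P ⊓ N, g⁻¹ * x * g = n⁻¹ * x * n) :
    g * n⁻¹ ∈ Subgroup.centralizer ↑(P ⊓ N) ∧
      ∀ x ∈ P, x⁻¹ * (g * n⁻¹)⁻¹ * x * (g * n⁻¹) ∈
        N ⊓ Subgroup.centralizer ↑(P ⊓ N) := by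
  have hcent : g * n⁻¹ ∈ Subgroup.centralizer ↑(P ⊓ N) := by
    rw [Subgroup.mem_centralizer_iff]
    intro y hy
    have h1 := hgn y hy
    have h2 := congrArg (fun z => g * z * n⁻¹) h1
    simpa [mul_assoc] using h2
  refine ⟨hcent, fun x hx => ?_⟩
  refine Subgroup.mem_inf.mpr ⟨?_, ?_⟩
  · -- membership in N
    have h2 : x⁻¹ * g⁻¹ * x * g ∈ N := by
      have := (Subgroup.mem_inf.mp (hgcomm x hx)).2
      simpa [mul_assoc] using this
    have h3 : x⁻¹ * n * x ∈ N := by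
      have := ‹N.Normal›.conj_mem n hnN x⁻¹
      simpa using this
    have key : x⁻¹ * (g * n⁻¹)⁻¹ * x * (g * n⁻¹)
        = (x⁻¹ * n * x) * (x⁻¹ * g⁻¹ * x * g) * n⁻¹ := by
      group
    rw [key]
    exact mul_mem (mul_mem h3 h2) (inv_mem hnN)
  · -- membership in the centralizer
    have hconj : x⁻¹ * (g * n⁻¹)⁻¹ * x ∈ Subgroup.centralizer ↑(P ⊓ N) := by
      rw [Subgroup.mem_centralizer_iff]
      intro y hy
      have hy' : y ∈ P ⊓ N := hy
      have hxy : x * y * x⁻¹ ∈ P ⊓ N := by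
        refine Subgroup.mem_inf.mpr ⟨?_, ?_⟩
        · exact mul_mem (mul_mem hx (Subgroup.mem_inf.mp hy').1) (inv_mem hx)
        · exact ‹N.Normal›.conj_mem y (Subgroup.mem_inf.mp hy').2 x
      have hc := (Subgroup.mem_centralizer_iff.mp hcent) (x * y * x⁻¹) hxy
      -- hc : (x * y * x⁻¹) * (g * n⁻¹) = (g * n⁻¹) * (x * y * x⁻¹)
      have := congrArg (fun z => x⁻¹ * (g * n⁻¹)⁻¹ * z * (g * n⁻¹)⁻¹ * x) hc
      simpa [mul_assoc] using this.symm
    have : x⁻¹ * (g * n⁻¹)⁻¹ * x * (g * n⁻¹)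
        = (x⁻¹ * (g * n⁻¹)⁻¹ * x) * (g * n⁻¹) := by group
    rw [this]
    exact mul_mem hconj hcent
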